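/- arXiv:2209.07454 — 3 statements merged into one kernel-verified Lean document; each statement's English description precedes it below -/
import Mathlib

section
/- (Deterministic core of the guarantee with stochastic rewards and adversarial constraints.) Under all the hypotheses of the adversarial-adversarial guarantee — namely: T, T₁ ∈ ℕ with 1 ≤ T₁ ≤ T, ρ ≥ 0, 0 < ρ̃ ≤ ρ, x_1,…,x_T ∈ X, λ_1,…,λ_{T₁} ∈ D_{ρ̃}, λ_{T₁+1},…,λ_T ∈ Δ_m, f_t : X → [0,1], g_t : X → [−1,1]^m, ξ*, ξ° ∈ Ξ with g_{t,i}(ξ°) ≤ −ρ for all t, i, constants M, R^P₁, R^D₁, R^P₂, R^D₂ ≥ 0, with (i) primal regret Σ_{t=1}^{T₁}(f_t(x_t) − ⟨λ_t,g_t(x_t)⟩) ≥ Σ_{t=1}^{T₁}(f_t(ξ) − ⟨λ_t,g_t(ξ)⟩) − (1+2/ρ̃)R^P₁ for every ξ ∈ Ξ, (ii) dual regret Σ_{t=1}^{T₁}⟨λ_t,g_t(x_t)⟩ ≥ Σ_{t=1}^{T₁}⟨λ,g_t(x_t)⟩ − R^D₁/ρ̃ for every λ ∈ D_{ρ̃},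 (iii) T₁ = T or max_i Σ_{t=1}^{T₁} g_{t,i}(x_t) ≥ (T−T₁)ρ̃, (iv) Σ_{t=1}^{T₁} g_{t,i}(x_t) ≤ (T−T₁)ρ̃ + M for every i, (v) recovery primal regret Σ_{t=T₁+1}^{T}(−⟨λ_t,g_t(x_t)⟩) ≥ Σ_{t=T₁+1}^{T}(−⟨λ_t,g_t(ξ°)⟩) − 2R^P₂, (vi) recovery dual regret Σ_{t=T₁+1}^{T}⟨λ_t,g_t(x_t)⟩ ≥ Σ_{t=T₁+1}^{T}⟨λ,g_t(x_t)⟩ − R^D₂ for every λ ∈ Δ_m — assume in addition that there is a measurable f̄ : X → [0,1] and E ≥ 0 with |Σ_{t=1}^{T} f_t(x_t) − Σ_{t=1}^{T} f̄(x_t)| ≤ E and |Σ_{t=1}^{T} f_t(ξ*) − T·f̄(ξ*)| ≤ E. Then Σ_{t=1}^{T} f̄(x_t) ≥ (ρ/(1+ρ))·T·f̄(ξ*) − (1+2/ρ̃)R^P₁ − R^D₁/ρ̃ − 2E, and for every i ∈ [m], Σ_{t=1}^{T} g_{t,i}(x_t) ≤ M + 2R^P₂ + R^D₂. -/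
open MeasureTheory Finset

lemma aux_integrable {X : Type} [MeasurableSpace X] (μ : Measure X) [IsFiniteMeasure μ]
    {h : X → ℝ} (hm : Measurable h) (hb : ∀ y, |h y| ≤ 1) : Integrable h μ :=
  (integrable_const (1:ℝ)).mono' hm.aestronglyMeasurable (ae_of_all _ (by simpa [Real.norm_eq_abs] using hb))

lemma aux_mix_integral {X : Type} [MeasurableSpace X] (μ ν : Measure X)
    [IsProbabilityMeasure μ] [IsProbabilityMeasure ν] {a b : ℝ} (ha : 0 ≤ a) (hb : 0 ≤ b)
    {h : X → ℝ} (hm : Measurable h) (h1 : ∀ y, |h y| ≤ 1) :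
    ∫ y, h y ∂(ENNReal.ofReal a • μ + ENNReal.ofReal b • ν) =
      a * ∫ y, h y ∂μ + b * ∫ y, h y ∂ν := by
  have i1 : Integrable h μ := aux_integrable μ hm h1
  have i2 : Integrable h ν := aux_integrable ν hm h1
  rw [integral_add_measure (i1.smul_measure ENNReal.ofReal_ne_top)
      (i2.smul_measure ENNReal.ofReal_ne_top), integral_smul_measure, integral_smul_measure]
  simp [ENNReal.toReal_ofReal ha, ENNReal.toReal_ofReal hb]

lemma aux_int_le_one {X : Type} [MeasurableSpace X] (μ : Measure X) [IsProbabilityMeasure μ]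
    {h : X → ℝ} (hm : Measurable h) (hb : ∀ y, |h y| ≤ 1) : ∫ y, h y ∂μ ≤ 1 := by
  calc ∫ y, h y ∂μ ≤ ∫ _, (1:ℝ) ∂μ :=
        integral_mono (aux_integrable μ hm hb) (integrable_const 1)
          (fun y => (abs_le.mp (hb y)).2)
    _ = 1 := by simp

lemma aux_sum_split (T₁ T : ℕ) (h : T₁ ≤ T) (F : ℕ → ℝ) :
    ∑ t ∈ Finset.Icc 1 T₁, F t + ∑ t ∈ Finset.Icc (T₁+1) T, F t = ∑ t ∈ Finset.Icc 1 T, F t := by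
  rw [show (1:ℕ) = 0 + 1 from rfl, Finset.Icc_add_one_left_eq_Ioc, Finset.Icc_add_one_left_eq_Ioc, zero_add,
    Finset.Icc_add_one_left_eq_Ioc]
  exact Finset.sum_Ioc_consecutive F (Nat.zero_le _) h


/-- Deterministic core of the guarantee with stochastic rewards and adversarial
constraints. -/
theorem statement14 {X : Type} [MeasurableSpace X] {m : ℕ} (hm : 0 < m)
    (T T₁ : ℕ) (hT₁ : 1 ≤ T₁) (hTT : T₁ ≤ T)
    (ρt ρ : ℝ) (hρ : 0 ≤ ρ) (hρt : 0 < ρt) (hρtρ : ρt ≤ ρ)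
    (x : ℕ → X) (lam : ℕ → Fin m → ℝ)
    -- play-phase duals lie in `D_{ρ̃}`, recovery-phase duals lie in `Δ_m`
    (hlam1 : ∀ t ∈ Finset.Icc 1 T₁, (∀ i, 0 ≤ lam t i) ∧ ∑ i, lam t i ≤ 1 / ρt)
    (hlam2 : ∀ t ∈ Finset.Icc (T₁ + 1) T, (∀ i, 0 ≤ lam t i) ∧ ∑ i, lam t i = 1)
    (f : ℕ → X → ℝ) (g : ℕ → Fin m → X → ℝ)
    (hfm : ∀ t, Measurable (f t)) (hf01 : ∀ t y, f t y ∈ Set.Icc (0:ℝ) 1)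
    (hgm : ∀ t i, Measurable (g t i)) (hg1 : ∀ t i y, g t i y ∈ Set.Icc (-1:ℝ) 1)
    (ξs ξo : ProbabilityMeasure X)
    -- ξ° is strictly feasible by margin ρ for every round's constraints
    (hfeaso : ∀ t ∈ Finset.Icc 1 T, ∀ i, ∫ y, g t i y ∂(ξo : Measure X) ≤ -ρ)
    (M RP1 RD1 RP2 RD2 : ℝ)
    (hM : 0 ≤ M) (hRP1 : 0 ≤ RP1) (hRD1 : 0 ≤ RD1) (hRP2 : 0 ≤ RP2) (hRD2 : 0 ≤ RD2)
    -- (i) play-phase primal regret bound against every fixed mixture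
    (h1 : ∀ ξ : ProbabilityMeasure X,
          ∑ t ∈ Finset.Icc 1 T₁, (f t (x t) - ∑ i, lam t i * g t i (x t)) ≥
          ∑ t ∈ Finset.Icc 1 T₁, ((∫ y, f t y ∂(ξ : Measure X)) -
            ∑ i, lam t i * ∫ y, g t i y ∂(ξ : Measure X)) - (1 + 2 / ρt) * RP1)
    -- (ii) play-phase dual regret bound
    (h2 : ∀ l : Fin m → ℝ, (∀ i, 0 ≤ l i) → (∑ i, l i ≤ 1 / ρt) →
          ∑ t ∈ Finset.Icc 1 T₁, ∑ i, lam t i * g t i (x t) ≥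
          ∑ t ∈ Finset.Icc 1 T₁, ∑ i, l i * g t i (x t) - RD1 / ρt)
    -- (iii) stopping condition of the play phase
    (h3 : T₁ = T ∨ ∃ i, ((T : ℝ) - (T₁ : ℝ)) * ρt ≤ ∑ t ∈ Finset.Icc 1 T₁, g t i (x t))
    -- (iv) play-phase violation threshold
    (h4 : ∀ i, ∑ t ∈ Finset.Icc 1 T₁, g t i (x t) ≤ ((T : ℝ) - (T₁ : ℝ)) * ρt + M)
    -- (v) recovery-phase primal regret bound
    (h5 : ∑ t ∈ Finset.Icc (T₁ + 1) T, (-(∑ i, lam t i * g t i (x t))) ≥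
          ∑ t ∈ Finset.Icc (T₁ + 1) T,
            (-(∑ i, lam t i * ∫ y, g t i y ∂(ξo : Measure X))) - 2 * RP2)
    -- (vi) recovery-phase dual regret bound
    (h6 : ∀ l : Fin m → ℝ, (∀ i, 0 ≤ l i) → (∑ i, l i = 1) →
          ∑ t ∈ Finset.Icc (T₁ + 1) T, ∑ i, lam t i * g t i (x t) ≥
          ∑ t ∈ Finset.Icc (T₁ + 1) T, ∑ i, l i * g t i (x t) - RD2)
    -- additional stochastic-reward hypotheses
    (fbar : X → ℝ) (hfbm : Measurable fbar) (hfb01 : ∀ y, fbar y ∈ Set.Icc (0:ℝ) 1)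
    (E : ℝ) (hE : 0 ≤ E)
    (h7 : |∑ t ∈ Finset.Icc 1 T, f t (x t) - ∑ t ∈ Finset.Icc 1 T, fbar (x t)| ≤ E)
    (h8 : |∑ t ∈ Finset.Icc 1 T, (∫ y, f t y ∂(ξs : Measure X)) -
            (T : ℝ) * ∫ y, fbar y ∂(ξs : Measure X)| ≤ E) :
    (∑ t ∈ Finset.Icc 1 T, fbar (x t) ≥
      (ρ / (1 + ρ)) * ((T : ℝ) * ∫ y, fbar y ∂(ξs : Measure X))
        - (1 + 2 / ρt) * RP1 - RD1 / ρt - 2 * E) ∧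
    (∀ i, ∑ t ∈ Finset.Icc 1 T, g t i (x t) ≤ M + 2 * RP2 + RD2) := by
  have h1ρ : (0:ℝ) < 1 + ρ := by linarith
  set a : ℝ := ρ / (1 + ρ) with ha_def
  set b : ℝ := 1 / (1 + ρ) with hb_def
  have ha : 0 ≤ a := div_nonneg hρ h1ρ.le
  have hb : 0 ≤ b := by rw [hb_def]; positivity
  have hab : a + b = 1 := by rw [ha_def, hb_def]; field_simp; ring
  have ha1 : a ≤ 1 := by rw [ha_def, div_le_one h1ρ]; linarith
  have hTr : (T₁:ℝ) ≤ (T:ℝ) := Nat.cast_le.mpr hTT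
  have hcard : ((Finset.Icc (T₁+1) T).card : ℝ) = (T:ℝ) - (T₁:ℝ) := by
    rw [Nat.card_Icc, show T + 1 - (T₁+1) = T - T₁ from by omega, Nat.cast_sub hTT]
  have hfabs : ∀ t y, |f t y| ≤ 1 := fun t y =>
    abs_le.mpr ⟨by linarith [(hf01 t y).1], (hf01 t y).2⟩
  have hgabs : ∀ t i y, |g t i y| ≤ 1 := fun t i y =>
    abs_le.mpr ⟨(hg1 t i y).1, (hg1 t i y).2⟩
  -- Part 2: constraint violation bound
  have part2 : ∀ i, ∑ t ∈ Finset.Icc 1 T, g t i (x t) ≤ M + 2 * RP2 + RD2 := by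
    intro i
    have hrecfeas : ∀ t ∈ Finset.Icc (T₁+1) T,
        ρ ≤ -(∑ j, lam t j * ∫ y, g t j y ∂(ξo : Measure X)) := by
      intro t ht
      have htT : t ∈ Finset.Icc 1 T := by
        simp only [Finset.mem_Icc] at ht ⊢; omega
      have hl := hlam2 t ht
      have hle : ∑ j, lam t j * ∫ y, g t j y ∂(ξo : Measure X) ≤ ∑ j, lam t j * (-ρ) :=
        Finset.sum_le_sum fun j _ => mul_le_mul_of_nonneg_left (hfeaso t htT j) (hl.1 j)
      rw [← Finset.sum_mul, hl.2] at hle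
      linarith
    have hA : ((T:ℝ) - (T₁:ℝ)) * ρ - 2 * RP2 ≤
        ∑ t ∈ Finset.Icc (T₁+1) T, (-(∑ j, lam t j * g t j (x t))) := by
      have h' : ∑ _t ∈ Finset.Icc (T₁+1) T, ρ ≤
          ∑ t ∈ Finset.Icc (T₁+1) T, (-(∑ j, lam t j * ∫ y, g t j y ∂(ξo : Measure X))) :=
        Finset.sum_le_sum hrecfeas
      rw [Finset.sum_const, nsmul_eq_mul, hcard] at h'
      linarith [h5]
    have hB : ∑ t ∈ Finset.Icc (T₁+1) T, g t i (x t) ≤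
        ∑ t ∈ Finset.Icc (T₁+1) T, ∑ j, lam t j * g t j (x t) + RD2 := by
      have h6' := h6 (fun j => if j = i then 1 else 0)
        (fun j => by split <;> norm_num) (by simp)
      have hrw : ∀ t, ∑ j, (if j = i then (1:ℝ) else 0) * g t j (x t) = g t i (x t) := by
        intro t; simp
      simp only [hrw] at h6'
      linarith
    have hsneg : ∑ t ∈ Finset.Icc (T₁+1) T, (-(∑ j, lam t j * g t j (x t))) =
        -∑ t ∈ Finset.Icc (T₁+1) T, ∑ j, lam t j * g t j (x t) := by
      rw [Finset.sum_neg_distrib]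
    rw [hsneg] at hA
    have hsplit := aux_sum_split T₁ T hTT (fun t => g t i (x t))
    have h4' := h4 i
    nlinarith [mul_nonneg (by linarith : (0:ℝ) ≤ (T:ℝ) - (T₁:ℝ)) (by linarith : (0:ℝ) ≤ ρ - ρt)]
  refine ⟨?_, part2⟩
  -- Part 1: reward bound
  set μ' : Measure X := ENNReal.ofReal a • (ξs : Measure X) + ENNReal.ofReal b • (ξo : Measure X)
    with hμ'
  have hP : IsProbabilityMeasure μ' := by
    constructor
    rw [hμ']
    simp only [Measure.coe_add, Pi.add_apply, Measure.smul_apply, smul_eq_mul,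
      measure_univ, mul_one]
    rw [← ENNReal.ofReal_add ha hb, hab, ENNReal.ofReal_one]
  have hintf : ∀ t, ∫ y, f t y ∂μ' =
      a * ∫ y, f t y ∂(ξs : Measure X) + b * ∫ y, f t y ∂(ξo : Measure X) := fun t =>
    aux_mix_integral _ _ ha hb (hfm t) (hfabs t)
  have hintg : ∀ t i, ∫ y, g t i y ∂μ' =
      a * ∫ y, g t i y ∂(ξs : Measure X) + b * ∫ y, g t i y ∂(ξo : Measure X) := fun t i =>
    aux_mix_integral _ _ ha hb (hgm t i) (hgabs t i)
  have hg'le : ∀ t ∈ Finset.Icc 1 T₁, ∀ i, ∫ y, g t i y ∂μ' ≤ 0 := by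
    intro t ht i
    have htT : t ∈ Finset.Icc 1 T := Finset.Icc_subset_Icc_right hTT ht
    have e1 : ∫ y, g t i y ∂(ξs : Measure X) ≤ 1 := aux_int_le_one _ (hgm t i) (hgabs t i)
    have e2 := hfeaso t htT i
    have k1 : a * ∫ y, g t i y ∂(ξs : Measure X) ≤ a * 1 := mul_le_mul_of_nonneg_left e1 ha
    have k2 : b * ∫ y, g t i y ∂(ξo : Measure X) ≤ b * (-ρ) := mul_le_mul_of_nonneg_left e2 hb
    have key : a * 1 + b * (-ρ) = 0 := by rw [ha_def, hb_def]; field_simp; ring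
    rw [hintg t i]; linarith
  have hfs0 : ∀ t, 0 ≤ ∫ y, f t y ∂(ξs : Measure X) := fun t =>
    integral_nonneg fun y => (hf01 t y).1
  have hfs1 : ∀ t, ∫ y, f t y ∂(ξs : Measure X) ≤ 1 := fun t =>
    aux_int_le_one _ (hfm t) (hfabs t)
  have hfo0 : ∀ t, 0 ≤ ∫ y, f t y ∂(ξo : Measure X) := fun t =>
    integral_nonneg fun y => (hf01 t y).1
  -- Step A
  have hA : ∑ t ∈ Finset.Icc 1 T₁, (f t (x t) - ∑ i, lam t i * g t i (x t)) ≥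
      ∑ t ∈ Finset.Icc 1 T₁, a * ∫ y, f t y ∂(ξs : Measure X) - (1 + 2 / ρt) * RP1 := by
    have h1' := h1 ⟨μ', hP⟩
    have h1'' : ∑ t ∈ Finset.Icc 1 T₁, (f t (x t) - ∑ i, lam t i * g t i (x t)) ≥
        ∑ t ∈ Finset.Icc 1 T₁, ((∫ y, f t y ∂μ') -
          ∑ i, lam t i * ∫ y, g t i y ∂μ') - (1 + 2 / ρt) * RP1 := h1'
    have hterm : ∑ t ∈ Finset.Icc 1 T₁, a * ∫ y, f t y ∂(ξs : Measure X) ≤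
        ∑ t ∈ Finset.Icc 1 T₁, ((∫ y, f t y ∂μ') - ∑ i, lam t i * ∫ y, g t i y ∂μ') := by
      apply Finset.sum_le_sum
      intro t ht
      have k1 : ∑ i, lam t i * ∫ y, g t i y ∂μ' ≤ 0 :=
        Finset.sum_nonpos fun i _ =>
          mul_nonpos_of_nonneg_of_nonpos ((hlam1 t ht).1 i) (hg'le t ht i)
      have k2 : 0 ≤ b * ∫ y, f t y ∂(ξo : Measure X) := mul_nonneg hb (hfo0 t)
      rw [hintf t]; linarith
    linarith
  -- Step B
  have hB : ∑ t ∈ Finset.Icc 1 T₁, ∑ i, lam t i * g t i (x t) ≥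
      ((T:ℝ) - (T₁:ℝ)) - RD1 / ρt := by
    rcases h3 with hTeq | ⟨i, hi⟩
    · have h2' := h2 (fun _ => 0) (fun _ => le_rfl)
        (by simp; positivity)
      simp only [zero_mul, Finset.sum_const_zero] at h2'
      subst hTeq
      simp only [sub_self, zero_sub]
      linarith
    · have h2' := h2 (fun j => if j = i then 1/ρt else 0)
        (fun j => by split <;> positivity)
        (le_of_eq (by simp))
      have hrw : ∑ t ∈ Finset.Icc 1 T₁, ∑ j, (if j = i then 1/ρt else 0) * g t j (x t) =
          (1/ρt) * ∑ t ∈ Finset.Icc 1 T₁, g t i (x t) := by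
        rw [Finset.mul_sum]
        exact Finset.sum_congr rfl fun t _ => by simp
      rw [hrw] at h2'
      have hmul : (1/ρt) * (((T:ℝ) - (T₁:ℝ)) * ρt) ≤
          (1/ρt) * ∑ t ∈ Finset.Icc 1 T₁, g t i (x t) :=
        mul_le_mul_of_nonneg_left hi (by positivity)
      have heq : (1/ρt) * (((T:ℝ) - (T₁:ℝ)) * ρt) = (T:ℝ) - (T₁:ℝ) := by
        field_simp
      linarith
  have hS1 : ∑ t ∈ Finset.Icc 1 T₁, f t (x t) =
      ∑ t ∈ Finset.Icc 1 T₁, (f t (x t) - ∑ i, lam t i * g t i (x t)) +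
      ∑ t ∈ Finset.Icc 1 T₁, ∑ i, lam t i * g t i (x t) := by
    rw [← Finset.sum_add_distrib]
    exact Finset.sum_congr rfl fun t _ => by ring
  have hmono : ∑ t ∈ Finset.Icc 1 T₁, f t (x t) ≤ ∑ t ∈ Finset.Icc 1 T, f t (x t) :=
    Finset.sum_le_sum_of_subset_of_nonneg (Finset.Icc_subset_Icc_right hTT)
      (fun t _ _ => (hf01 t (x t)).1)
  have hsplitf := aux_sum_split T₁ T hTT (fun t => a * ∫ y, f t y ∂(ξs : Measure X))
  have hrecb : ∑ t ∈ Finset.Icc (T₁+1) T, a * ∫ y, f t y ∂(ξs : Measure X) ≤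
      (T:ℝ) - (T₁:ℝ) := by
    calc ∑ t ∈ Finset.Icc (T₁+1) T, a * ∫ y, f t y ∂(ξs : Measure X)
        ≤ ∑ _t ∈ Finset.Icc (T₁+1) T, (1:ℝ) :=
          Finset.sum_le_sum fun t _ => mul_le_one₀ ha1 (hfs0 t) (hfs1 t)
      _ = (T:ℝ) - (T₁:ℝ) := by rw [Finset.sum_const, nsmul_eq_mul, mul_one, hcard]
  -- combine everything
  have hmain : ∑ t ∈ Finset.Icc 1 T, f t (x t) ≥
      a * (∑ t ∈ Finset.Icc 1 T, ∫ y, f t y ∂(ξs : Measure X))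
        - (1 + 2 / ρt) * RP1 - RD1 / ρt := by
    have : a * (∑ t ∈ Finset.Icc 1 T, ∫ y, f t y ∂(ξs : Measure X)) =
        ∑ t ∈ Finset.Icc 1 T, a * ∫ y, f t y ∂(ξs : Measure X) := by
      rw [Finset.mul_sum]
    rw [this, ← hsplitf]
    linarith
  have h7' := abs_le.mp h7
  have h8' := abs_le.mp h8
  have hmul8 : a * ((T:ℝ) * ∫ y, fbar y ∂(ξs : Measure X) - E) ≤
      a * ∑ t ∈ Finset.Icc 1 T, ∫ y, f t y ∂(ξs : Measure X) :=
    mul_le_mul_of_nonneg_left (by linarith [h8'.2]) ha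
  have hexp : a * ((T:ℝ) * ∫ y, fbar y ∂(ξs : Measure X) - E) =
      a * ((T:ℝ) * ∫ y, fbar y ∂(ξs : Measure X)) - a * E := by ring
  have haE : a * E ≤ E := mul_le_of_le_one_left hE ha1
  linarith [h7'.1, h7'.2]
end

section
/- (The empirical estimator never overestimates the feasibility parameter.) Let T₀ ∈ ℕ with T₀ ≥ 1, let x_1,…,x_{T₀} ∈ X, constraint functions g_t : X → [−1,1]^m, a measurable ḡ : X → [−1,1]^m, and constants ρ ∈ ℝ, E ≥ 0. Assume: (i) for every i ∈ [m], |Σ_{t=1}^{T₀} g_{t,i}(x_t) − Σ_{t=1}^{T₀} ḡ_i(x_t)| ≤ E; (ii) for every ξ ∈ Ξ, min_{i∈[m]} (−ḡ_i(ξ)) ≤ ρ. Then the estimator ρ̂ := −(1/T₀)·( max_{i∈[m]} Σ_{t=1}^{T₀} g_{t,i}(x_t) + E ) satisfies ρ̂ ≤ ρ. -/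
open MeasureTheory Finset ENNReal

/-- The empirical estimator `ρ̂ = −(1/T₀)(max_i Σ_t g_{t,i}(x_t) + E)` never overestimates
the feasibility parameter `ρ`. -/
theorem statement15 {X : Type} [MeasurableSpace X] {m : ℕ} (hm : 0 < m)
    (T₀ : ℕ) (hT₀ : 1 ≤ T₀)
    (x : ℕ → X)
    (g : ℕ → Fin m → X → ℝ)
    (hgm : ∀ t i, Measurable (g t i)) (hg1 : ∀ t i y, g t i y ∈ Set.Icc (-1:ℝ) 1)
    (gbar : Fin m → X → ℝ) (hgbm : ∀ i, Measurable (gbar i))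
    (hgb1 : ∀ i y, gbar i y ∈ Set.Icc (-1:ℝ) 1)
    (ρ E : ℝ) (hE : 0 ≤ E)
    -- (i) concentration of the constraints along the trajectory
    (h1 : ∀ i, |∑ t ∈ Finset.Icc 1 T₀, g t i (x t) -
            ∑ t ∈ Finset.Icc 1 T₀, gbar i (x t)| ≤ E)
    -- (ii) every mixture satisfies `min_i (−ḡ_i(ξ)) ≤ ρ`
    (h2 : ∀ ξ : ProbabilityMeasure X, (⨅ i, -(∫ y, gbar i y ∂(ξ : Measure X))) ≤ ρ) :
    -(1 / (T₀ : ℝ)) * ((⨆ i, ∑ t ∈ Finset.Icc 1 T₀, g t i (x t)) + E) ≤ ρ := by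
  haveI : Nonempty (Fin m) := ⟨⟨0, hm⟩⟩
  have hT₀pos : (0:ℝ) < (T₀:ℝ) := by exact_mod_cast hT₀
  set S : Fin m → ℝ := fun i => ∑ t ∈ Finset.Icc 1 T₀, g t i (x t) with hS
  set B : Fin m → ℝ := fun i => ∑ t ∈ Finset.Icc 1 T₀, gbar i (x t) with hB
  -- the empirical measure
  set μ : Measure X := ((T₀ : ℝ≥0∞))⁻¹ • ∑ t ∈ Finset.Icc 1 T₀, Measure.dirac (x t) with hμ
  have hcard : (Finset.Icc 1 T₀).card = T₀ := by
    simp [Nat.card_Icc]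
  have hprob : IsProbabilityMeasure μ := by
    constructor
    rw [hμ]
    simp only [Measure.smul_apply, Measure.finset_sum_apply, Measure.dirac_apply_of_mem
      (Set.mem_univ _), smul_eq_mul]
    rw [Finset.sum_const, hcard, nsmul_eq_mul, mul_one,
      ENNReal.inv_mul_cancel (by exact_mod_cast (by omega : T₀ ≠ 0)) (by simp)]
  set ξ : ProbabilityMeasure X := ⟨μ, hprob⟩ with hξ
  have hint : ∀ i, ∫ y, gbar i y ∂μ = (T₀:ℝ)⁻¹ * B i := by
    intro i
    rw [hμ, integral_smul_measure, integral_finset_sum_measure]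
    · simp only [integral_dirac' _ _ (hgbm i).stronglyMeasurable]
      rw [ENNReal.toReal_inv, smul_eq_mul]
      norm_num [hB]
    · intro t _
      exact (integrable_const (1:ℝ)).mono' (hgbm i).aestronglyMeasurable
        (Filter.Eventually.of_forall fun y => abs_le.mpr ⟨(hgb1 i y).1, (hgb1 i y).2⟩)
  have h2' : (⨅ i, -((T₀:ℝ)⁻¹ * B i)) ≤ ρ := by
    have := h2 ξ
    simpa [hξ, hint] using this
  obtain ⟨i₀, hi₀⟩ := Finite.exists_min (fun i => -((T₀:ℝ)⁻¹ * B i))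
  have hmin : -((T₀:ℝ)⁻¹ * B i₀) ≤ ρ := le_trans (le_ciInf hi₀) h2'
  have hsup : S i₀ ≤ ⨆ i, S i := le_ciSup (Set.Finite.bddAbove (Set.finite_range S)) i₀
  have habs : B i₀ ≤ S i₀ + E := by
    have := (abs_le.mp (h1 i₀)).1
    change -E ≤ S i₀ - B i₀ at this
    linarith
  have hBle : B i₀ ≤ (⨆ i, S i) + E := by linarith
  calc -(1 / (T₀ : ℝ)) * ((⨆ i, S i) + E) ≤ -((T₀:ℝ)⁻¹ * B i₀) := by
        rw [neg_mul, neg_le_neg_iff, one_div]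
        exact mul_le_mul_of_nonneg_left hBle (by positivity)
    _ ≤ ρ := hmin
end

section
/- (The empirical estimator is at least half the feasibility parameter.) Let T₀ ∈ ℕ with T₀ ≥ 1, let x_1,…,x_{T₀} ∈ X, λ_1,…,λ_{T₀} ∈ Δ_m, constraint functions g_t : X → [−1,1]^m, a measurable ḡ : X → [−1,1]^m, ξ° ∈ Ξ with ḡ_i(ξ°) ≤ −ρ for all i ∈ [m], and constants ρ ∈ ℝ, R^P, R^D, E ≥ 0. Assume: (i) Σ_{t=1}^{T₀}(−⟨λ_t, g_t(x_t)⟩) ≥ Σ_{t=1}^{T₀}(−⟨λ_t, g_t(ξ°)⟩) − 2·R^P; (ii) for every λ ∈ Δ_m, Σ_{t=1}^{T₀}⟨λ_t, g_t(x_t)⟩ ≥ Σ_{t=1}^{T₀}⟨λ, g_t(x_t)⟩ − R^D; (iii) |Σ_{t=1}^{T₀}⟨λ_t, g_t(ξ°)⟩ − Σ_{t=1}^{T₀}⟨λ_t, ḡ(ξ°)⟩| ≤ E; (iv) T₀·ρ/2 ≥ R^D + 2·R^P + 2·E. Then the estimator ρ̂ := −(1/T₀)·( max_{i∈[m]} Σ_{t=1}^{T₀}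 g_{t,i}(x_t) + E ) satisfies ρ̂ ≥ ρ/2. -/
open MeasureTheory Finset

/-- The empirical estimator `ρ̂ = −(1/T₀)(max_i Σ_t g_{t,i}(x_t) + E)` is at least half the
feasibility parameter `ρ`. -/
theorem statement16 {X : Type} [MeasurableSpace X] {m : ℕ} (hm : 0 < m)
    (T₀ : ℕ) (hT₀ : 1 ≤ T₀)
    (x : ℕ → X) (lam : ℕ → Fin m → ℝ)
    -- the dual iterates lie in the simplex `Δ_m`
    (hlam : ∀ t ∈ Finset.Icc 1 T₀, (∀ i, 0 ≤ lam t i) ∧ ∑ i, lam t i = 1)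
    (g : ℕ → Fin m → X → ℝ)
    (hgm : ∀ t i, Measurable (g t i)) (hg1 : ∀ t i y, g t i y ∈ Set.Icc (-1:ℝ) 1)
    (gbar : Fin m → X → ℝ) (hgbm : ∀ i, Measurable (gbar i))
    (hgb1 : ∀ i y, gbar i y ∈ Set.Icc (-1:ℝ) 1)
    (ξo : ProbabilityMeasure X)
    (ρ RP RD E : ℝ) (hRP : 0 ≤ RP) (hRD : 0 ≤ RD) (hE : 0 ≤ E)
    (hfeaso : ∀ i, ∫ y, gbar i y ∂(ξo : Measure X) ≤ -ρ)
    -- (i) primal regret bound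
    (h1 : ∑ t ∈ Finset.Icc 1 T₀, (-(∑ i, lam t i * g t i (x t))) ≥
          ∑ t ∈ Finset.Icc 1 T₀,
            (-(∑ i, lam t i * ∫ y, g t i y ∂(ξo : Measure X))) - 2 * RP)
    -- (ii) dual regret bound
    (h2 : ∀ l : Fin m → ℝ, (∀ i, 0 ≤ l i) → (∑ i, l i = 1) →
          ∑ t ∈ Finset.Icc 1 T₀, ∑ i, lam t i * g t i (x t) ≥
          ∑ t ∈ Finset.Icc 1 T₀, ∑ i, l i * g t i (x t) - RD)
    -- (iii) concentration of the constraints at ξ°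
    (h3 : |∑ t ∈ Finset.Icc 1 T₀, ∑ i, lam t i * ∫ y, g t i y ∂(ξo : Measure X) -
            ∑ t ∈ Finset.Icc 1 T₀, ∑ i, lam t i * ∫ y, gbar i y ∂(ξo : Measure X)| ≤ E)
    -- (iv) the horizon is long enough
    (h4 : (T₀ : ℝ) * ρ / 2 ≥ RD + 2 * RP + 2 * E) :
    ρ / 2 ≤ -(1 / (T₀ : ℝ)) * ((⨆ i, ∑ t ∈ Finset.Icc 1 T₀, g t i (x t)) + E) := by
  have hT : (0:ℝ) < T₀ := by exact_mod_cast hT₀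
  haveI : Nonempty (Fin m) := ⟨⟨0, hm⟩⟩
  -- A ≤ B + 2RP
  have hA : ∑ t ∈ Finset.Icc 1 T₀, ∑ i, lam t i * g t i (x t) ≤
      (∑ t ∈ Finset.Icc 1 T₀, ∑ i, lam t i * ∫ y, g t i y ∂(ξo : Measure X)) + 2 * RP := by
    simp only [Finset.sum_neg_distrib] at h1
    linarith
  -- B ≤ C + E
  have hB : ∑ t ∈ Finset.Icc 1 T₀, ∑ i, lam t i * ∫ y, g t i y ∂(ξo : Measure X) ≤
      (∑ t ∈ Finset.Icc 1 T₀, ∑ i, lam t i * ∫ y, gbar i y ∂(ξo : Measure X)) + E := by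
    have := abs_le.mp h3
    linarith [this.2]
  -- C ≤ -T₀ρ
  have hC : ∑ t ∈ Finset.Icc 1 T₀, ∑ i, lam t i * ∫ y, gbar i y ∂(ξo : Measure X) ≤
      -((T₀:ℝ) * ρ) := by
    have hpt : ∀ t ∈ Finset.Icc 1 T₀,
        ∑ i, lam t i * ∫ y, gbar i y ∂(ξo : Measure X) ≤ -ρ := by
      intro t ht
      obtain ⟨hpos, hsum⟩ := hlam t ht
      calc ∑ i, lam t i * ∫ y, gbar i y ∂(ξo : Measure X)
          ≤ ∑ i, lam t i * (-ρ) :=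
            Finset.sum_le_sum fun i _ => mul_le_mul_of_nonneg_left (hfeaso i) (hpos i)
        _ = -ρ := by rw [← Finset.sum_mul, hsum, one_mul]
    calc ∑ t ∈ Finset.Icc 1 T₀, ∑ i, lam t i * ∫ y, gbar i y ∂(ξo : Measure X)
        ≤ ∑ t ∈ Finset.Icc 1 T₀, (-ρ) := Finset.sum_le_sum hpt
      _ = -((T₀:ℝ) * ρ) := by
          rw [Finset.sum_const, Nat.card_Icc]
          simp [mul_comm]
  -- each coordinate sum bounded
  have hS : (⨆ i, ∑ t ∈ Finset.Icc 1 T₀, g t i (x t)) ≤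
      -((T₀:ℝ) * ρ) + E + 2 * RP + RD := by
    apply ciSup_le
    intro i
    have hl := h2 (fun j => if j = i then 1 else 0)
      (fun j => by positivity) (by simp)
    simp only [ite_mul, one_mul, zero_mul, Finset.sum_ite_eq', Finset.mem_univ, if_true] at hl
    linarith
  have key : (⨆ i, ∑ t ∈ Finset.Icc 1 T₀, g t i (x t)) + E ≤ -((T₀:ℝ) * ρ / 2) := by
    linarith
  have hrw : -(1 / (T₀:ℝ)) * ((⨆ i, ∑ t ∈ Finset.Icc 1 T₀, g t i (x t)) + E) =
      -(((⨆ i, ∑ t ∈ Finset.Icc 1 T₀, g t i (x t)) + E)) / T₀ := by ring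
  rw [hrw, le_div_iff₀ hT]
  nlinarith
end
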